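/- Let q₀ ≥ ⋯ ≥ q_{n−1} be reals, m ≥ 1, n ≥ 2m+1, b > 0, v = ⌊(n+m−1)/2⌋, and let w* satisfy (q_v + q_{⌊(n+m)/2⌋})/2 ≤ w* < q_v. Append the m values: w₍ₙ₎ = 2w* − q_v and w₍ₙ₊₁₎ = ⋯ = w₍ₙ₊ₘ₋₁₎ = q_{n−1} − b. Then the median of the resulting n+m values equals w*. -/

import Mathlib

open Finset

/-- Median of a multiset of reals: average of the two middle order statistics
(equal to the middle one for odd cardinality). -/
noncomputable def med (s : Multiset ℝ) : ℝ :=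
  ((s.sort (· ≤ ·)).getD ((Multiset.card s - 1) / 2) 0 +
    (s.sort (· ≤ ·)).getD (Multiset.card s / 2) 0) / 2

/-- `m`-trimmed mean: remove the `m` largest and `m` smallest values and average the rest. -/
noncomputable def trimmedMean (m : ℕ) (s : Multiset ℝ) : ℝ :=
  ((((s.sort (· ≤ ·)).drop m).take (Multiset.card s - 2 * m)).sum) /
    ((Multiset.card s : ℝ) - 2 * m)

/-- The multiset of the first `n` values of `q`. -/
noncomputable def qMs (n : ℕ) (q : ℕ → ℝ) : Multiset ℝ :=
  (Finset.range n).val.map q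

theorem stmt11 (n m : ℕ) (hm : 1 ≤ m) (hn : 2 * m + 1 ≤ n) (q : ℕ → ℝ)
    (hq : ∀ i j, i ≤ j → j < n → q j ≤ q i) (b wstar : ℝ) (hb : 0 < b)
    (v : ℕ) (hv : v = (n + m - 1) / 2)
    (hw1 : (q v + q ((n + m) / 2)) / 2 ≤ wstar) (hw2 : wstar < q v) :
    med (qMs n q + ({2 * wstar - q v} + Multiset.replicate (m - 1) (q (n - 1) - b))) = wstar := by
  -- n + m must be even, otherwise hw1 and hw2 contradict
  have hNe : (n + m) % 2 = 0 := by
    by_contra h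
    have h1 : (n + m) / 2 = v := by omega
    rw [h1] at hw1
    linarith
  have hv1 : (n + m) / 2 = v + 1 := by omega
  rw [hv1] at hw1
  have hvn : v + 1 < n := by omega
  set x : ℝ := 2 * wstar - q v with hx
  set c : ℝ := q (n - 1) - b with hc
  have hxq : q (v + 1) ≤ x := by rw [hx]; linarith
  have hxv : x < q v := by rw [hx]; linarith
  have hqn : ∀ i, i ≤ n - 1 → q (n - 1) ≤ q i := fun i hi => hq i (n - 1) hi (by omega)
  set A : List ℝ := List.replicate (m - 1) c with hA
  set B : List ℝ := (List.range (n - 1 - v)).map (fun k => q (n - 1 - k)) with hB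
  set C : List ℝ := (List.range (v + 1)).map (fun k => q (v - k)) with hC
  set L : List ℝ := A ++ (B ++ (x :: C)) with hL
  have memB : ∀ a ∈ B, ∃ i, v + 1 ≤ i ∧ i ≤ n - 1 ∧ a = q i := by
    intro a ha
    rw [hB, List.mem_map] at ha
    obtain ⟨k, hk, rfl⟩ := ha
    rw [List.mem_range] at hk
    exact ⟨n - 1 - k, by omega, by omega, rfl⟩
  have memC : ∀ a ∈ C, ∃ i, i ≤ v ∧ a = q i := by
    intro a ha
    rw [hC, List.mem_map] at ha
    obtain ⟨k, hk, rfl⟩ := ha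
    exact ⟨v - k, by omega, rfl⟩
  have hcx : c ≤ x := by
    have := hqn (v + 1) (by omega)
    rw [hc]; linarith
  -- sortedness of L
  have hsB : List.Pairwise (· ≤ ·) B := by
    rw [hB, List.pairwise_map]
    exact List.pairwise_lt_range.imp (fun {i j} h => hq _ _ (by omega) (by omega))
  have hsC : List.Pairwise (· ≤ ·) C := by
    rw [hC, List.pairwise_map]
    exact List.pairwise_lt_range.imp (fun {i j} h => hq _ _ (by omega) (by omega))
  have hsL : List.Pairwise (· ≤ ·) L := by
    rw [hL, List.pairwise_append]
    refine ⟨List.pairwise_replicate.mpr (Or.inr le_rfl), ?_, ?_⟩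
    · rw [List.pairwise_append]
      refine ⟨hsB, ?_, ?_⟩
      · rw [List.pairwise_cons]
        refine ⟨?_, hsC⟩
        intro a ha
        obtain ⟨i, hi, rfl⟩ := memC a ha
        exact le_trans (le_of_lt hxv) (hq i v hi (by omega))
      · intro a ha b' hb'
        obtain ⟨i, hi1, hi2, rfl⟩ := memB a ha
        have h1 : q i ≤ q (v + 1) := hq (v + 1) i hi1 (by omega)
        rcases List.mem_cons.mp hb' with rfl | hb'
        · linarith
        · obtain ⟨j, hj, rfl⟩ := memC b' hb'
          have h2 : q (v + 1) ≤ q v := hq v (v + 1) (by omega) hvn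
          have h3 : q v ≤ q j := hq j v hj (by omega)
          linarith
    · intro a ha b' hb'
      rw [hA, List.mem_replicate] at ha
      obtain ⟨-, rfl⟩ := ha
      rcases List.mem_append.mp hb' with h | h
      · obtain ⟨i, -, hi2, rfl⟩ := memB b' h
        have := hqn i hi2
        rw [hc]; linarith
      · rcases List.mem_cons.mp h with rfl | h
        · exact hcx
        · obtain ⟨j, hj, rfl⟩ := memC b' h
          have := hqn j (by omega)
          rw [hc]; linarith
  -- the multiset equals ↑L
  have hBr : B = (List.map q (List.range' (v + 1) (n - 1 - v))).reverse := by
    rw [← List.map_reverse, List.reverse_range', List.map_map, hB]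
    refine List.map_congr_left fun a _ => ?_
    show q (n - 1 - a) = q (v + 1 + (n - 1 - v) - 1 - a)
    congr 1
    omega
  have hCr : C = (List.map q (List.range (v + 1))).reverse := by
    rw [← List.map_reverse, List.range_eq_range', List.reverse_range', List.map_map, hC]
    refine List.map_congr_left fun a _ => ?_
    show q (v - a) = q (0 + (v + 1) - 1 - a)
    congr 1
    omega
  have hsplit : List.range n = List.range (v + 1) ++ List.range' (v + 1) (n - 1 - v) := by
    have h1 : (n - 1 - v) + (v + 1) = n := by omega
    have h2 := @List.range'_append 0 (v + 1) (n - 1 - v) 1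
    rw [Nat.zero_add, Nat.one_mul] at h2
    rw [List.range_eq_range', List.range_eq_range', h2]
    congr 1
    omega
  have hms : qMs n q + ({x} + Multiset.replicate (m - 1) c) = (↑L : Multiset ℝ) := by
    rw [hL, hA, hBr, hCr]
    unfold qMs
    rw [Finset.range_val, ← Multiset.coe_range, Multiset.map_coe, hsplit, List.map_append]
    simp only [← Multiset.coe_add, Multiset.coe_reverse, ← Multiset.cons_coe,
      ← Multiset.singleton_add, Multiset.coe_replicate]
    abel
  have hsort : (qMs n q + ({x} + Multiset.replicate (m - 1) c)).sort (· ≤ ·) = L := by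
    refine List.Perm.eq_of_pairwise' (Multiset.pairwise_sort _ _) hsL ?_
    rw [← Multiset.coe_eq_coe, Multiset.sort_eq, hms]
  have hcard : Multiset.card (qMs n q + ({x} + Multiset.replicate (m - 1) c)) = n + m := by
    simp [qMs]
    omega
  unfold med
  rw [hsort, hcard]
  have hi1 : (n + m - 1) / 2 = v := by omega
  rw [hi1, hv1]
  have hlenA : A.length = m - 1 := by rw [hA]; simp
  have hlenB : B.length = n - 1 - v := by rw [hB]; simp
  have hgv : L.getD v 0 = x := by
    rw [hL, List.getD_append_right _ _ _ _ (by rw [hlenA]; omega), hlenA,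
        List.getD_append_right _ _ _ _ (by rw [hlenB]; omega), hlenB]
    have h0 : v - (m - 1) - (n - 1 - v) = 0 := by omega
    rw [h0, List.getD_cons_zero]
  have hgv1 : L.getD (v + 1) 0 = q v := by
    rw [hL, List.getD_append_right _ _ _ _ (by rw [hlenA]; omega), hlenA,
        List.getD_append_right _ _ _ _ (by rw [hlenB]; omega), hlenB]
    have h0 : v + 1 - (m - 1) - (n - 1 - v) = 1 := by omega
    rw [h0]
    have : (x :: C).getD 1 0 = C.getD 0 0 := List.getD_cons_succ ..
    rw [this, hC, List.getD_eq_getElem _ _ (by simp)]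
    simp
  rw [hgv, hgv1, hx]
  ring
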